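/- Let β : ℝ → ℝ satisfy hypothesis (H_β), let m > 0 and 0 < λ ≤ Λ. Let Ω ⊆ ℝⁿ be open, u : Ω → ℝ twice continuously differentiable, x ∈ Ω with u(x) ≥ 0, and set v = ψ ∘ u. Then 𝓜⁺(D²u(x)) + m λ β(u(x)) ‖∇u(x)‖² ≤ 𝓜⁺(D²v(x)) / ψ'(u(x)) ≤ 𝓜⁺(D²u(x)) + m Λ β(u(x)) ‖∇u(x)‖², and the same two inequalities hold with 𝓜⁻ in place of 𝓜⁺. -/

import Mathlib

open MeasureTheory Filter Set

/-- The integro-exponential change of variables `ψ(u) = ∫₀ᵘ exp(m ∫₀ˢ β(t) dt) ds`. -/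
noncomputable def psi (β : ℝ → ℝ) (m : ℝ) (u : ℝ) : ℝ :=
  ∫ s in (0:ℝ)..u, Real.exp (m * ∫ t in (0:ℝ)..s, β t)

/-- Its derivative `ψ'(u) = exp(m ∫₀ᵘ β(t) dt)`. -/
noncomputable def psi' (β : ℝ → ℝ) (m : ℝ) (u : ℝ) : ℝ :=
  Real.exp (m * ∫ t in (0:ℝ)..u, β t)

/-- The admissible set for the Pucci extremal operators: real symmetric matrices `A`
with `λI ≤ A ≤ ΛI` in the Loewner (positive-semidefinite) order. -/
def pucciSet (n : ℕ) (lam Lam : ℝ) : Set (Matrix (Fin n) (Fin n) ℝ) :=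
  {A | (A - lam • (1 : Matrix (Fin n) (Fin n) ℝ)).PosSemidef ∧
       (Lam • (1 : Matrix (Fin n) (Fin n) ℝ) - A).PosSemidef}

/-- Pucci maximal operator `𝓜⁺(X) = sup { tr(A X) : λI ≤ A ≤ ΛI }`. -/
noncomputable def pucciPlus (n : ℕ) (lam Lam : ℝ) (X : Matrix (Fin n) (Fin n) ℝ) : ℝ :=
  sSup ((fun A => Matrix.trace (A * X)) '' pucciSet n lam Lam)

/-- Pucci minimal operator `𝓜⁻(X) = inf { tr(A X) : λI ≤ A ≤ ΛI }`. -/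
noncomputable def pucciMinus (n : ℕ) (lam Lam : ℝ) (X : Matrix (Fin n) (Fin n) ℝ) : ℝ :=
  sInf ((fun A => Matrix.trace (A * X)) '' pucciSet n lam Lam)

/-- The Hessian matrix `D²u(x)` of a real-valued function on Euclidean space. -/
noncomputable def hess (n : ℕ) (u : EuclideanSpace ℝ (Fin n) → ℝ)
    (x : EuclideanSpace ℝ (Fin n)) : Matrix (Fin n) (Fin n) ℝ :=
  Matrix.of fun i j =>
    fderiv ℝ (fderiv ℝ u) x (EuclideanSpace.single i 1) (EuclideanSpace.single j 1)


section PucciAux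
open Matrix
variable {n : ℕ} {lam Lam : ℝ}

lemma psi'_hasDerivAt {β : ℝ → ℝ} (hβ : Continuous β) (m : ℝ) (y : ℝ) :
    HasDerivAt (psi' β m) (m * β y * psi' β m y) y := by
  have hF : HasDerivAt (fun s => ∫ t in (0:ℝ)..s, β t) (β y) y :=
    (hβ.integral_hasStrictDerivAt 0 y).hasDerivAt
  have h2 : HasDerivAt (fun s => m * ∫ t in (0:ℝ)..s, β t) (m * β y) y := hF.const_mul m
  have := h2.exp
  rw [show psi' β m = fun s => Real.exp (m * ∫ t in (0:ℝ)..s, β t) from rfl]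
  simpa [psi', mul_comm, mul_assoc, mul_left_comm] using this

lemma psi'_continuous {β : ℝ → ℝ} (hβ : Continuous β) (m : ℝ) : Continuous (psi' β m) :=
  continuous_iff_continuousAt.2 fun y => (psi'_hasDerivAt hβ m y).continuousAt

lemma psi_hasDerivAt {β : ℝ → ℝ} (hβ : Continuous β) (m : ℝ) (y : ℝ) :
    HasDerivAt (psi β m) (psi' β m y) y :=
  ((psi'_continuous hβ m).integral_hasStrictDerivAt 0 y).hasDerivAt

lemma quad_expand (B : Matrix (Fin n) (Fin n) ℝ) (v : Fin n → ℝ) :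
    v ⬝ᵥ (B *ᵥ v) = ∑ i, ∑ j, B i j * v i * v j := by
  simp only [dotProduct, Matrix.mulVec, Finset.mul_sum]
  exact Finset.sum_congr rfl fun i _ => Finset.sum_congr rfl fun j _ => by
    ring

lemma quad_nonneg {B : Matrix (Fin n) (Fin n) ℝ} (hB : B.PosSemidef) (v : Fin n → ℝ) :
    0 ≤ ∑ i, ∑ j, B i j * v i * v j := by
  have := hB.dotProduct_mulVec_nonneg v
  rwa [star_trivial, quad_expand] at this

lemma smul_one_quad (c : ℝ) (v : Fin n → ℝ) :
    ∑ i, ∑ j, (c • (1:Matrix (Fin n) (Fin n) ℝ)) i j * v i * v j = c * ∑ i, v i ^ 2 := by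
  simp [Matrix.smul_apply, Matrix.one_apply, ite_mul, Finset.mul_sum, pow_two, mul_assoc]

lemma pucci_quad_bounds {A : Matrix (Fin n) (Fin n) ℝ} (hA : A ∈ pucciSet n lam Lam)
    (v : Fin n → ℝ) :
    lam * ∑ i, v i ^ 2 ≤ ∑ i, ∑ j, A i j * v i * v j ∧
    ∑ i, ∑ j, A i j * v i * v j ≤ Lam * ∑ i, v i ^ 2 := by
  have h1 := quad_nonneg hA.1 v
  have h2 := quad_nonneg hA.2 v
  have e1 : ∑ i, ∑ j, (A - lam • (1:Matrix (Fin n) (Fin n) ℝ)) i j * v i * v j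
      = (∑ i, ∑ j, A i j * v i * v j) - lam * ∑ i, v i ^ 2 := by
    simp only [Matrix.sub_apply, sub_mul, Finset.sum_sub_distrib]
    rw [smul_one_quad]
  have e2 : ∑ i, ∑ j, ((Lam:ℝ) • (1:Matrix (Fin n) (Fin n) ℝ) - A) i j * v i * v j
      = Lam * (∑ i, v i ^ 2) - ∑ i, ∑ j, A i j * v i * v j := by
    simp only [Matrix.sub_apply, sub_mul, Finset.sum_sub_distrib]
    rw [smul_one_quad]
  rw [e1] at h1; rw [e2] at h2
  constructor <;> linarith

lemma pucci_symm {A : Matrix (Fin n) (Fin n) ℝ} (hA : A ∈ pucciSet n lam Lam)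
    (i j : Fin n) : A j i = A i j := by
  have h := congrFun (congrFun hA.1.1 i) j
  simpa [Matrix.conjTranspose_apply, Matrix.one_apply, eq_comm] using h

lemma quad_single_pair {A : Matrix (Fin n) (Fin n) ℝ} (i j : Fin n) (hij : i ≠ j) (a b : ℝ) :
    (Pi.single i a + Pi.single j b) ⬝ᵥ (A *ᵥ (Pi.single i a + Pi.single j b))
      = a*a * A i i + a*b * A i j + a*b * A j i + b*b * A j j := by
  simp [Matrix.mulVec_add, dotProduct_add, add_dotProduct,
    Matrix.mulVec_single, single_dotProduct, hij, hij.symm]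
  ring

lemma pucci_entry_bound (hlam : 0 < lam) (hle : lam ≤ Lam)
    {A : Matrix (Fin n) (Fin n) ℝ} (hA : A ∈ pucciSet n lam Lam) (i j : Fin n) :
    |A i j| ≤ Lam := by
  have hdiag : ∀ k, lam ≤ A k k ∧ A k k ≤ Lam := by
    intro k
    have h := pucci_quad_bounds hA (Pi.single k 1)
    simpa [Finset.sum_ite_eq', Pi.single_apply, ite_mul, pow_two] using h
  rcases hdiag i with ⟨hi1, hi2⟩
  rcases hdiag j with ⟨hj1, hj2⟩
  rcases eq_or_ne i j with rfl | hij
  · rw [abs_le]; constructor <;> nlinarith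
  · have hsym := pucci_symm hA i j
    have hq1 := quad_nonneg hA.2 (Pi.single i 1 + Pi.single j 1)
    have hq2 := quad_nonneg hA.2 (Pi.single i 1 + Pi.single j (-1))
    rw [← quad_expand] at hq1 hq2
    have e0 : ∀ b : ℝ, (Pi.single i 1 + Pi.single j b) ⬝ᵥ ((Lam • (1:Matrix (Fin n) (Fin n) ℝ) - A) *ᵥ (Pi.single i 1 + Pi.single j b))
        = (1*1*(Lam - A i i) + 1*b*(0 - A i j) + 1*b*(0 - A j i) + b*b*(Lam - A j j)) := by
      intro b
      rw [quad_single_pair i j hij]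
      simp [Matrix.sub_apply, Matrix.smul_apply, Matrix.one_apply, hij, hij.symm]
    rw [e0] at hq1 hq2
    rw [abs_le]; constructor <;> nlinarith

lemma pucci_nonempty (hle : lam ≤ Lam) : (pucciSet n lam Lam).Nonempty := by
  refine ⟨lam • 1, ?_, ?_⟩
  · simpa using Matrix.PosSemidef.zero
  · have : (Lam • (1:Matrix (Fin n) (Fin n) ℝ) - lam • 1) = Matrix.diagonal (fun _ => Lam - lam) := by
      rw [← sub_smul]; simp [Matrix.smul_one_eq_diagonal]
    rw [this]
    exact Matrix.PosSemidef.diagonal (fun _ => by simp [sub_nonneg, hle])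

lemma trace_formula (A X : Matrix (Fin n) (Fin n) ℝ) :
    Matrix.trace (A * X) = ∑ i, ∑ j, A i j * X j i := by
  simp [Matrix.trace, Matrix.diag, Matrix.mul_apply]

lemma pucci_bdd (hlam : 0 < lam) (hle : lam ≤ Lam) (X : Matrix (Fin n) (Fin n) ℝ) :
    BddAbove ((fun A => Matrix.trace (A * X)) '' pucciSet n lam Lam) ∧
    BddBelow ((fun A => Matrix.trace (A * X)) '' pucciSet n lam Lam) := by
  have key : ∀ A ∈ pucciSet n lam Lam, |Matrix.trace (A * X)| ≤ Lam * ∑ i, ∑ j, |X j i| := by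
    intro A hA
    rw [trace_formula]
    calc |∑ i, ∑ j : Fin n, A i j * X j i| ≤ ∑ i, ∑ j : Fin n, |A i j * X j i| := by
          refine (Finset.abs_sum_le_sum_abs _ _).trans ?_
          exact Finset.sum_le_sum fun i _ => Finset.abs_sum_le_sum_abs _ _
      _ ≤ ∑ i, ∑ j : Fin n, Lam * |X j i| := by
          refine Finset.sum_le_sum fun i _ => Finset.sum_le_sum fun j _ => ?_
          rw [abs_mul]
          exact mul_le_mul_of_nonneg_right (pucci_entry_bound hlam hle hA i j) (abs_nonneg _)
      _ = Lam * ∑ i, ∑ j, |X j i| := by rw [Finset.mul_sum]; simp [Finset.mul_sum]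
  constructor
  · exact ⟨Lam * ∑ i, ∑ j, |X j i|, by rintro y ⟨A, hA, rfl⟩; exact (abs_le.1 (key A hA)).2⟩
  · exact ⟨-(Lam * ∑ i, ∑ j, |X j i|), by rintro y ⟨A, hA, rfl⟩; exact (abs_le.1 (key A hA)).1⟩

lemma pucci_key (hlam : 0 < lam) (hle : lam ≤ Lam) (X : Matrix (Fin n) (Fin n) ℝ)
    (g : Fin n → ℝ) {c b : ℝ} (hc : 0 < c) (hb : 0 ≤ b) :
    (pucciPlus n lam Lam X + b * lam * (∑ i, g i ^ 2) ≤
        pucciPlus n lam Lam (c • X + (c * b) • Matrix.of (fun i j => g i * g j)) / c ∧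
      pucciPlus n lam Lam (c • X + (c * b) • Matrix.of (fun i j => g i * g j)) / c ≤
        pucciPlus n lam Lam X + b * Lam * (∑ i, g i ^ 2)) ∧
    (pucciMinus n lam Lam X + b * lam * (∑ i, g i ^ 2) ≤
        pucciMinus n lam Lam (c • X + (c * b) • Matrix.of (fun i j => g i * g j)) / c ∧
      pucciMinus n lam Lam (c • X + (c * b) • Matrix.of (fun i j => g i * g j)) / c ≤
        pucciMinus n lam Lam X + b * Lam * (∑ i, g i ^ 2)) := by
  set G : Matrix (Fin n) (Fin n) ℝ := Matrix.of (fun i j => g i * g j) with hG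
  set Y : Matrix (Fin n) (Fin n) ℝ := c • X + (c * b) • G with hY
  set s : ℝ := ∑ i, g i ^ 2 with hs
  have hs0 : 0 ≤ s := Finset.sum_nonneg fun i _ => sq_nonneg _
  have htr : ∀ A ∈ pucciSet n lam Lam,
      Matrix.trace (A * Y) = c * (Matrix.trace (A * X) + b * ∑ i, ∑ j, A i j * g i * g j) := by
    intro A hA
    rw [trace_formula, trace_formula]
    simp only [hY, Matrix.add_apply, Matrix.smul_apply, Matrix.of_apply, smul_eq_mul]
    rw [Finset.mul_sum]
    rw [mul_add, Finset.mul_sum, Finset.mul_sum, ← Finset.sum_add_distrib]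
    refine Finset.sum_congr rfl fun i _ => ?_
    rw [Finset.mul_sum, Finset.mul_sum, Finset.mul_sum, ← Finset.sum_add_distrib]
    refine Finset.sum_congr rfl fun j _ => ?_
    simp only [hG, Matrix.of_apply]
    ring
  have hne := pucci_nonempty (n := n) (lam := lam) hle
  have hneX : ((fun A => Matrix.trace (A * X)) '' pucciSet n lam Lam).Nonempty := hne.image _
  have hneY : ((fun A => Matrix.trace (A * Y)) '' pucciSet n lam Lam).Nonempty := hne.image _
  have hbX := pucci_bdd hlam hle X
  have hbY := pucci_bdd hlam hle Y
  have hQ : ∀ A ∈ pucciSet n lam Lam,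
      lam * s ≤ ∑ i, ∑ j, A i j * g i * g j ∧ (∑ i, ∑ j, A i j * g i * g j) ≤ Lam * s :=
    fun A hA => pucci_quad_bounds hA g
  constructor
  · constructor
    · have : pucciPlus n lam Lam X ≤ pucciPlus n lam Lam Y / c - b * lam * s := by
        refine csSup_le hneX ?_
        rintro t ⟨A, hA, rfl⟩
        dsimp only
        rw [le_sub_iff_add_le, le_div_iff₀ hc]
        have h1 : (Matrix.trace (A * X) + b * lam * s) * c ≤ Matrix.trace (A * Y) := by
          rw [htr A hA]
          have := (hQ A hA).1
          nlinarith [mul_nonneg (mul_nonneg hc.le hb) (sub_nonneg.2 this)]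
        have h2 : Matrix.trace (A * Y) ≤ pucciPlus n lam Lam Y :=
          le_csSup hbY.1 ⟨A, hA, rfl⟩
        linarith
      linarith
    · rw [div_le_iff₀ hc]
      refine csSup_le hneY ?_
      rintro t ⟨A, hA, rfl⟩
      dsimp only
      rw [htr A hA]
      have h1 : Matrix.trace (A * X) ≤ pucciPlus n lam Lam X := le_csSup hbX.1 ⟨A, hA, rfl⟩
      have h2 := (hQ A hA).2
      nlinarith [mul_nonneg hc.le (sub_nonneg.2 h1), mul_nonneg (mul_nonneg hc.le hb) (sub_nonneg.2 h2)]
  · constructor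
    · rw [le_div_iff₀ hc]
      refine le_csInf hneY ?_
      rintro t ⟨A, hA, rfl⟩
      dsimp only
      rw [htr A hA]
      have h1 : pucciMinus n lam Lam X ≤ Matrix.trace (A * X) := csInf_le hbX.2 ⟨A, hA, rfl⟩
      have h2 := (hQ A hA).1
      nlinarith [mul_nonneg hc.le (sub_nonneg.2 h1), mul_nonneg (mul_nonneg hc.le hb) (sub_nonneg.2 h2)]
    · have : pucciMinus n lam Lam Y / c - b * Lam * s ≤ pucciMinus n lam Lam X := by
        refine le_csInf hneX ?_
        rintro t ⟨A, hA, rfl⟩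
        dsimp only
        have h1 : pucciMinus n lam Lam Y ≤ Matrix.trace (A * Y) := csInf_le hbY.2 ⟨A, hA, rfl⟩
        rw [htr A hA] at h1
        have h2 := (hQ A hA).2
        rw [sub_le_iff_le_add, div_le_iff₀ hc]
        nlinarith [h1, mul_nonneg (mul_nonneg hc.le hb) (sub_nonneg.2 h2)]
      linarith

lemma hess_comp {β : ℝ → ℝ} (hβ : Continuous β) (m : ℝ)
    {Ω : Set (EuclideanSpace ℝ (Fin n))} (hΩ : IsOpen Ω)
    {u : EuclideanSpace ℝ (Fin n) → ℝ} (hu : ContDiffOn ℝ 2 u Ω)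
    {x : EuclideanSpace ℝ (Fin n)} (hx : x ∈ Ω) :
    hess n (fun y => psi β m (u y)) x =
      psi' β m (u x) • hess n u x +
      (psi' β m (u x) * (m * β (u x))) •
        Matrix.of (fun i j => fderiv ℝ u x (EuclideanSpace.single i 1) *
          fderiv ℝ u x (EuclideanSpace.single j 1)) := by
  set L := fderiv ℝ u x with hL
  have hdiff : ∀ y ∈ Ω, DifferentiableAt ℝ u y := fun y hy =>
    (hu.contDiffAt (hΩ.mem_nhds hy)).differentiableAt two_ne_zero
  have hdv : ∀ y ∈ Ω, HasFDerivAt (fun z => psi β m (u z)) (psi' β m (u y) • fderiv ℝ u y) y := by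
    intro y hy
    have h1 := psi_hasDerivAt hβ m (u y)
    have h2 := (hdiff y hy).hasFDerivAt
    simpa [Function.comp_def] using h1.comp_hasFDerivAt y h2
  have hev : fderiv ℝ (fun z => psi β m (u z)) =ᶠ[nhds x] fun y => psi' β m (u y) • fderiv ℝ u y := by
    filter_upwards [hΩ.mem_nhds hx] with y hy
    exact (hdv y hy).fderiv
  have hcd : ContDiffAt ℝ 2 u x := hu.contDiffAt (hΩ.mem_nhds hx)
  have hF : HasFDerivAt (fun y => fderiv ℝ u y) (fderiv ℝ (fderiv ℝ u) x) x := by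
    have : ContDiffAt ℝ 1 (fderiv ℝ u) x := hcd.fderiv_right (by norm_num)
    exact (this.differentiableAt one_ne_zero).hasFDerivAt
  have hφ : HasFDerivAt (fun y => psi' β m (u y)) ((m * β (u x) * psi' β m (u x)) • L) x := by
    have h1 := psi'_hasDerivAt hβ m (u x)
    simpa [Function.comp_def] using h1.comp_hasFDerivAt x (hdiff x hx).hasFDerivAt
  have hmain : fderiv ℝ (fderiv ℝ (fun z => psi β m (u z))) x =
      psi' β m (u x) • fderiv ℝ (fderiv ℝ u) x +
        ((m * β (u x) * psi' β m (u x)) • L).smulRight L := by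
    rw [hev.fderiv_eq]
    exact (hφ.smul hF).fderiv
  ext i j
  simp only [hess, Matrix.of_apply, Matrix.add_apply, Matrix.smul_apply, smul_eq_mul, hmain,
    ContinuousLinearMap.add_apply, ContinuousLinearMap.coe_smul', Pi.smul_apply,
    ContinuousLinearMap.smulRight_apply, ContinuousLinearMap.smul_apply]
  ring

lemma grad_norm_sq (u : EuclideanSpace ℝ (Fin n) → ℝ) (x : EuclideanSpace ℝ (Fin n)) :
    ‖gradient u x‖ ^ 2 = ∑ i, (fderiv ℝ u x (EuclideanSpace.single i 1)) ^ 2 := by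
  have hg : ∀ i, fderiv ℝ u x (EuclideanSpace.single i 1) = gradient u x i := by
    intro i
    have : fderiv ℝ u x = (InnerProductSpace.toDual ℝ (EuclideanSpace ℝ (Fin n))) (gradient u x) := by
      simp [gradient]
    rw [this, InnerProductSpace.toDual_apply_apply]
    rw [real_inner_comm]
    simpa using EuclideanSpace.inner_single_left (𝕜 := ℝ) i 1 (gradient u x)
  have hn : ‖gradient u x‖ ^ 2 = ∑ i, (gradient u x i) ^ 2 := by
    rw [EuclideanSpace.norm_eq]
    rw [Real.sq_sqrt (by positivity)]
    simp [sq_abs]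
  rw [hn]
  exact (Finset.sum_congr rfl fun i _ => by rw [hg i]).symm

end PucciAux

theorem stmt7 (n : ℕ) (β : ℝ → ℝ) (m lam Lam : ℝ) (hm : 0 < m)
    (hlam : 0 < lam) (hle : lam ≤ Lam)
    (hodd : ∀ s, β (-s) = -β s)
    (hlip : LocallyLipschitz β)
    (hmono : Monotone β)
    (hsign : ∀ s, 0 ≤ β s * s)
    (htop : Tendsto β atTop atTop)
    (Ω : Set (EuclideanSpace ℝ (Fin n))) (hΩ : IsOpen Ω)
    (u : EuclideanSpace ℝ (Fin n) → ℝ) (hu : ContDiffOn ℝ 2 u Ω)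
    (x : EuclideanSpace ℝ (Fin n)) (hx : x ∈ Ω) (hux : 0 ≤ u x) :
    (pucciPlus n lam Lam (hess n u x) + m * lam * β (u x) * ‖gradient u x‖ ^ 2 ≤
        pucciPlus n lam Lam (hess n (fun y => psi β m (u y)) x) / psi' β m (u x) ∧
      pucciPlus n lam Lam (hess n (fun y => psi β m (u y)) x) / psi' β m (u x) ≤
        pucciPlus n lam Lam (hess n u x) + m * Lam * β (u x) * ‖gradient u x‖ ^ 2) ∧
    (pucciMinus n lam Lam (hess n u x) + m * lam * β (u x) * ‖gradient u x‖ ^ 2 ≤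
        pucciMinus n lam Lam (hess n (fun y => psi β m (u y)) x) / psi' β m (u x) ∧
      pucciMinus n lam Lam (hess n (fun y => psi β m (u y)) x) / psi' β m (u x) ≤
        pucciMinus n lam Lam (hess n u x) + m * Lam * β (u x) * ‖gradient u x‖ ^ 2) := by
  have hβ : Continuous β := hlip.continuous
  set c : ℝ := psi' β m (u x) with hc_def
  have hc : 0 < c := Real.exp_pos _
  set b : ℝ := m * β (u x) with hb_def
  have hβ0 : β 0 = 0 := by
    have := hodd 0
    simp at this
    linarith
  have hb : 0 ≤ b := by
    have : 0 ≤ β (u x) := hβ0 ▸ hmono hux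
    exact mul_nonneg hm.le this
  set g : Fin n → ℝ := fun i => fderiv ℝ u x (EuclideanSpace.single i 1) with hg_def
  have hhess : hess n (fun y => psi β m (u y)) x =
      c • hess n u x + (c * b) • Matrix.of (fun i j => g i * g j) := by
    simpa using hess_comp hβ m hΩ hu hx
  have hgrad : ‖gradient u x‖ ^ 2 = ∑ i, g i ^ 2 := grad_norm_sq u x
  have key := pucci_key (n := n) hlam hle (hess n u x) g hc hb
  rw [hhess, hgrad]
  have e1 : m * lam * β (u x) * (∑ i, g i ^ 2) = b * lam * (∑ i, g i ^ 2) := by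
    rw [hb_def]; ring
  have e2 : m * Lam * β (u x) * (∑ i, g i ^ 2) = b * Lam * (∑ i, g i ^ 2) := by
    rw [hb_def]; ring
  rw [e1, e2]
  exact key
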